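/- For matrices A ∈ ℝ^{J×R} and B ∈ ℝ^{I×R}, the k-rank of the Khatri-Rao product satisfies k_{A⊙B} ≥ min{k_A + k_B − 1, R}, provided k_A, k_B ≥ 1. -/

import Mathlib

open scoped BigOperators

/-- The k-rank (Kruskal rank) of a matrix: the largest `k ≤ R` such that every
set of `k` columns is linearly independent. -/
noncomputable def kRank {m : Type*} [Fintype m] {R : ℕ} (A : Matrix m (Fin R) ℝ) : ℕ :=
  sSup {k | k ≤ R ∧ ∀ s : Finset (Fin R), s.card = k →
    LinearIndependent ℝ (fun r : s => A.transpose r.val)}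

/-- The Khatri-Rao (column-wise Kronecker) product. -/
def khatriRao {J I R : ℕ} (A : Matrix (Fin J) (Fin R) ℝ)
    (B : Matrix (Fin I) (Fin R) ℝ) : Matrix (Fin J × Fin I) (Fin R) ℝ :=
  fun p r => A p.1 r * B p.2 r

section Helpers
open Matrix
set_option maxHeartbeats 1000000

lemma kRank_mem {m : Type*} [Fintype m] {R : ℕ} (A : Matrix m (Fin R) ℝ) :
    kRank A ≤ R ∧ ∀ s : Finset (Fin R), s.card = kRank A →
      LinearIndependent ℝ (fun r : s => A.transpose r.val) := by
  have h0 : (0:ℕ) ∈ {k | k ≤ R ∧ ∀ s : Finset (Fin R), s.card = k →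
      LinearIndependent ℝ (fun r : s => A.transpose r.val)} := by
    refine ⟨Nat.zero_le _, fun s hs => ?_⟩
    have : s = ∅ := Finset.card_eq_zero.mp hs
    subst this
    exact linearIndependent_empty_type
  have hbdd : BddAbove {k | k ≤ R ∧ ∀ s : Finset (Fin R), s.card = k →
      LinearIndependent ℝ (fun r : s => A.transpose r.val)} := ⟨R, fun k hk => hk.1⟩
  exact Nat.sSup_mem ⟨0, h0⟩ hbdd

lemma kRank_subset {m : Type*} [Fintype m] {R : ℕ} (A : Matrix m (Fin R) ℝ)
    (s : Finset (Fin R)) (hs : s.card ≤ kRank A) :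
    LinearIndependent ℝ (fun r : s => A.transpose r.val) := by
  obtain ⟨hR, hLI⟩ := kRank_mem A
  have hR' : kRank A ≤ Fintype.card (Fin R) := by rw [Fintype.card_fin]; exact hR
  obtain ⟨t, hst, htc⟩ := Finset.exists_superset_card_eq hs hR'
  refine (hLI t htc).comp (fun r : s => (⟨r.1, hst r.2⟩ : t)) (fun a b h => ?_)
  exact Subtype.ext (by simpa using congrArg Subtype.val h)

lemma coeff_zero {J R : ℕ} (A : Matrix (Fin J) (Fin R) ℝ) (T : Finset (Fin R))
    (hLI : LinearIndependent ℝ (fun r : T => A.transpose r.val))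
    (c : Fin R → ℝ) (h : ∀ j, ∑ r ∈ T, c r * A j r = 0) :
    ∀ r ∈ T, c r = 0 := by
  intro r hr
  refine Fintype.linearIndependent_iff.mp hLI (fun r => c r.val) ?_ ⟨r, hr⟩
  funext j
  have h1 := h j
  simp only [Finset.sum_apply, Pi.smul_apply, transpose_apply, smul_eq_mul, Pi.zero_apply]
  rw [← Finset.sum_attach T (fun r => c r * A j r)] at h1
  exact h1

lemma key {J I R : ℕ} (A : Matrix (Fin J) (Fin R) ℝ) (B : Matrix (Fin I) (Fin R) ℝ)
    (hA : 1 ≤ kRank A) (hB : 1 ≤ kRank B)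
    (s : Finset (Fin R)) (hcard : s.card ≤ kRank A + kRank B - 1) :
    LinearIndependent ℝ (fun r : s => (khatriRao A B).transpose r.val) := by
  classical
  rw [Fintype.linearIndependent_iff]
  intro g hg
  by_contra hcon
  push_neg at hcon
  obtain ⟨i0, hi0⟩ := hcon
  set kA := kRank A with hkA
  set kB := kRank B with hkB
  set d : Fin R → ℝ := fun r => if h : r ∈ s then g ⟨r, h⟩ else 0 with hd
  set T : Finset (Fin R) := s.filter (fun r => d r ≠ 0) with hT
  have hTsub : T ⊆ s := Finset.filter_subset _ _
  have hTd : ∀ r ∈ T, d r ≠ 0 := fun r hr => (Finset.mem_filter.mp hr).2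
  have hi0T : (i0 : Fin R) ∈ T := by
    refine Finset.mem_filter.mpr ⟨i0.2, ?_⟩
    simpa [hd, i0.2] using hi0
  have hTcard : T.card ≤ kA + kB - 1 := le_trans (Finset.card_le_card hTsub) hcard
  have hkey : ∀ (j : Fin J) (i : Fin I), ∑ r ∈ T, d r * (A j r * B i r) = 0 := by
    intro j i
    have h1 := congrFun hg (j, i)
    simp only [Finset.sum_apply, Pi.smul_apply, transpose_apply, khatriRao, smul_eq_mul,
      Pi.zero_apply] at h1
    calc ∑ r ∈ T, d r * (A j r * B i r)
        = ∑ r ∈ s, d r * (A j r * B i r) := Finset.sum_subset hTsub (by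
            intro r hrs hrT
            have hdr : d r = 0 := by
              by_contra h
              exact hrT (Finset.mem_filter.mpr ⟨hrs, h⟩)
            simp [hdr])
      _ = ∑ r ∈ s.attach, d r.val * (A j r.val * B i r.val) :=
            (Finset.sum_attach s (fun r => d r * (A j r * B i r))).symm
      _ = 0 := by
          rw [← h1]
          exact Finset.sum_congr rfl (fun r _ => by simp [hd, r.2])
  rcases le_or_gt T.card kB with hle | hlt
  · -- Case 1: few columns; B-columns over T independent ⇒ A-columns on T vanish
    have hLIB := kRank_subset B T hle
    have hAz : ∀ j, A j i0.val = 0 := by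
      intro j
      have h2 := coeff_zero B T hLIB (fun r => d r * A j r) (fun i => by
        rw [← hkey j i]
        exact Finset.sum_congr rfl fun r _ => by ring) i0.val hi0T
      rcases mul_eq_zero.mp h2 with h | h
      · exact absurd h (hTd _ hi0T)
      · exact h
    have hLI1 := kRank_subset A {i0.val} (by simpa using hA)
    exact hLI1.ne_zero ⟨i0.val, Finset.mem_singleton_self _⟩
      (funext fun j => by simpa [Matrix.transpose_apply] using hAz j)
  · -- Case 2
    obtain ⟨T0, hT0sub, hT0card⟩ := Finset.exists_subset_card_eq hlt.le
    have hT0ne : T0.Nonempty := Finset.card_pos.mp (by rw [hT0card]; exact hB)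
    obtain ⟨r0, hr0⟩ := hT0ne
    have hLIB0 := kRank_subset B T0 hT0card.le
    -- move to Euclidean space
    set e := (WithLp.linearEquiv 2 ℝ (Fin I → ℝ)).symm with he
    set v : Fin R → EuclideanSpace ℝ (Fin I) := fun r => e (B.transpose r) with hv
    have hLIv : LinearIndependent ℝ (fun r : T0 => v r.val) :=
      hLIB0.map' e.toLinearMap e.ker
    have hnm : v r0 ∉ Submodule.span ℝ
        ((fun r : T0 => v r.val) '' {x : T0 | x.val ≠ r0}) := by
      have := hLIv.notMem_span_image (s := {x : T0 | x.val ≠ r0}) (x := ⟨r0, hr0⟩)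
        (by simp)
      exact this
    set W : Submodule ℝ (EuclideanSpace ℝ (Fin I)) := Submodule.span ℝ
        ((fun r : T0 => v r.val) '' {x : T0 | x.val ≠ r0}) with hW
    have hmemW : ∀ r ∈ T0.erase r0, v r ∈ W := by
      intro r hr
      refine Submodule.subset_span ?_
      exact ⟨⟨r, Finset.mem_of_mem_erase hr⟩, by simpa using Finset.ne_of_mem_erase hr, rfl⟩
    set y : EuclideanSpace ℝ (Fin I) := v r0 - (W.orthogonalProjectionOnto (v r0) : _) with hy
    have hyW : y ∈ Wᗮ := Submodule.sub_starProjection_mem_orthogonal (K := W) (v r0)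
    have hy0 : y ≠ 0 := by
      intro h
      apply hnm
      have : v r0 = (W.orthogonalProjectionOnto (v r0) : EuclideanSpace ℝ (Fin I)) :=
        sub_eq_zero.mp h
      rw [hW] at *
      rw [this]
      exact (Submodule.orthogonalProjectionOnto _ (v r0)).2
    have hinner0 : ∀ r ∈ T0.erase r0, (inner ℝ (v r) y : ℝ) = 0 := fun r hr =>
      Submodule.inner_right_of_mem_orthogonal (hmemW r hr) hyW
    have hinnerr0 : (inner ℝ (v r0) y : ℝ) ≠ 0 := by
      have hvr0 : v r0 = y + (W.orthogonalProjectionOnto (v r0) : EuclideanSpace ℝ (Fin I)) := by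
        rw [hy]; abel
      rw [hvr0, inner_add_left,
        Submodule.inner_right_of_mem_orthogonal (W.orthogonalProjectionOnto (v r0)).2 hyW,
        add_zero]
      intro h
      exact hy0 (inner_self_eq_zero.mp h)
    -- dot-product form
    have hip : ∀ r, (inner ℝ (v r) y : ℝ) = ∑ i : Fin I, B i r * y i := by
      intro r
      rw [PiLp.inner_apply]
      exact Finset.sum_congr rfl fun i _ => by
        simp [hv, he, RCLike.inner_apply, mul_comm]
    set c : Fin R → ℝ := fun r => d r * ∑ i : Fin I, B i r * y i with hc
    have hsumc : ∀ j, ∑ r ∈ T, c r * A j r = 0 := by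
      intro j
      calc ∑ r ∈ T, c r * A j r
          = ∑ r ∈ T, ∑ i : Fin I, d r * (A j r * B i r) * y i := by
            refine Finset.sum_congr rfl fun r _ => ?_
            simp only [hc, Finset.mul_sum, Finset.sum_mul]
            exact Finset.sum_congr rfl fun i _ => by ring
        _ = ∑ i : Fin I, ∑ r ∈ T, d r * (A j r * B i r) * y i := Finset.sum_comm
        _ = ∑ i : Fin I, (∑ r ∈ T, d r * (A j r * B i r)) * y i :=
            Finset.sum_congr rfl fun i _ => (Finset.sum_mul _ _ _).symm
        _ = 0 := by simp [hkey]
    set U : Finset (Fin R) := T.filter (fun r => c r ≠ 0) with hU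
    have hUsub : U ⊆ T := Finset.filter_subset _ _
    have hUsub2 : U ⊆ T \ (T0.erase r0) := by
      intro r hr
      rw [Finset.mem_sdiff]
      refine ⟨hUsub hr, fun hmem => ?_⟩
      have hcr := (Finset.mem_filter.mp hr).2
      apply hcr
      rw [hc]
      have := hinner0 r hmem
      rw [hip r] at this
      simp [this]
    have hUcard : U.card ≤ kA := by
      have h1 := Finset.card_le_card hUsub2
      have h2 : (T \ (T0.erase r0)).card = T.card - (T0.erase r0).card :=
        Finset.card_sdiff_of_subset (fun x hx => hT0sub (Finset.mem_of_mem_erase hx))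
      have h3 : (T0.erase r0).card = kB - 1 := by
        rw [Finset.card_erase_of_mem hr0, hT0card]
      omega
    have hLIA := kRank_subset A U hUcard
    have hcz := coeff_zero A U hLIA c (fun j => by
      rw [← hsumc j]
      refine Finset.sum_subset hUsub ?_
      intro r hrT hrU
      have hcr : c r = 0 := by
        by_contra h
        exact hrU (Finset.mem_filter.mpr ⟨hrT, h⟩)
      simp [hcr])
    have hc0 := hcz r0 (Finset.mem_filter.mpr ⟨hT0sub hr0, by
      rw [hc]
      exact mul_ne_zero (hTd _ (hT0sub hr0)) (by rw [← hip r0]; exact hinnerr0)⟩)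
    rw [hc] at hc0
    exact mul_ne_zero (hTd _ (hT0sub hr0)) (by rw [← hip r0]; exact hinnerr0) hc0

end Helpers

/-- `k_{A⊙B} ≥ min{k_A + k_B − 1, R}` provided `k_A, k_B ≥ 1`. -/
theorem khatriRao_kRank {J I R : ℕ}
    (A : Matrix (Fin J) (Fin R) ℝ) (B : Matrix (Fin I) (Fin R) ℝ)
    (hA : 1 ≤ kRank A) (hB : 1 ≤ kRank B) :
    min (kRank A + kRank B - 1) R ≤ kRank (khatriRao A B) := by
  have hbdd : BddAbove {k | k ≤ R ∧ ∀ s : Finset (Fin R), s.card = k →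
      LinearIndependent ℝ (fun r : s => (khatriRao A B).transpose r.val)} :=
    ⟨R, fun k hk => hk.1⟩
  refine le_csSup hbdd ⟨min_le_right _ _, fun s hs => ?_⟩
  exact key A B hA hB s (by rw [hs]; exact min_le_left _ _)
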